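/- Let V be a real vector space of dimension 2m (with m ≥ 1) and let ω be a nondegenerate alternating bilinear form on V, regarded as an element of Λ²V*. Then for every integer k with k ≥ m-1, the linear map ε(ω) : Λ^k V* → Λ^{k+2} V* given by exterior multiplication α ↦ ω ∧ α is surjective. -/

import Mathlib

set_option synthInstance.maxHeartbeats 1000000
set_option maxHeartbeats 2000000


/-- The alternating `2`-form `(φ, ψ) ↦ φ(v)ψ(w) - ψ(v)φ(w)` on the dual space, used to
evaluate elements of `Λ² V*` against a pair of vectors `v, w ∈ V`. -/
noncomputable def evalPair {V : Type*} [AddCommGroup V] [Module ℝ V] (v w : V) :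
    (Module.Dual ℝ V) [⋀^Fin 2]→ₗ[ℝ] ℝ :=
  MultilinearMap.alternatization
    ((MultilinearMap.mkPiAlgebra ℝ (Fin 2) ℝ).compLinearMap
      ![Module.Dual.eval ℝ V v, Module.Dual.eval ℝ V w])

/-- Evaluation of an element of the exterior algebra of `V*` (thought of in degree `2`) against
a pair of vectors `v, w ∈ V`; this realizes an element of `Λ² V*` as a bilinear form on `V`. -/
noncomputable def asBilinForm {V : Type*} [AddCommGroup V] [Module ℝ V]
    (Ω : ExteriorAlgebra ℝ (Module.Dual ℝ V)) (v w : V) : ℝ :=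
  ExteriorAlgebra.liftAlternating
    (fun i => match i with
      | 2 => evalPair v w
      | _ => 0) Ω

namespace LefAux

open ExteriorAlgebra

lemma perm_fin_two : (Finset.univ : Finset (Equiv.Perm (Fin 2))) = {1, Equiv.swap 0 1} := by
  decide

lemma evalPair_apply {V : Type*} [AddCommGroup V] [Module ℝ V] (v w : V)
    (φ ψ : Module.Dual ℝ V) :
    evalPair v w ![φ, ψ] = φ v * ψ w - ψ v * φ w := by
  rw [evalPair, MultilinearMap.alternatization_apply, perm_fin_two]
  rw [Finset.sum_insert (by decide), Finset.sum_singleton]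
  simp [Equiv.Perm.sign_swap, MultilinearMap.compLinearMap_apply,
    MultilinearMap.mkPiAlgebra_apply, Fin.prod_univ_two, Module.Dual.eval_apply]
  ring

lemma asBilinForm_prod {V : Type*} [AddCommGroup V] [Module ℝ V] (v w : V)
    (φ ψ : Module.Dual ℝ V) :
    asBilinForm (ExteriorAlgebra.ι ℝ φ * ExteriorAlgebra.ι ℝ ψ) v w
      = φ v * ψ w - ψ v * φ w := by
  have h : ExteriorAlgebra.ι ℝ φ * ExteriorAlgebra.ι ℝ ψ
      = ιMulti ℝ 2 ![φ, ψ] := by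
    rw [ιMulti_apply]
    simp [List.ofFn_succ]
  rw [asBilinForm, h, ExteriorAlgebra.liftAlternating_apply_ιMulti]
  exact evalPair_apply v w φ ψ

lemma asBilinForm_add {V : Type*} [AddCommGroup V] [Module ℝ V] (v w : V)
    (x y : ExteriorAlgebra ℝ (Module.Dual ℝ V)) :
    asBilinForm (x + y) v w = asBilinForm x v w + asBilinForm y v w := by
  simp [asBilinForm]

lemma asBilinForm_smul {V : Type*} [AddCommGroup V] [Module ℝ V] (v w : V)
    (r : ℝ) (x : ExteriorAlgebra ℝ (Module.Dual ℝ V)) :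
    asBilinForm (r • x) v w = r * asBilinForm x v w := by
  simp [asBilinForm]

lemma asBilinForm_zero {V : Type*} [AddCommGroup V] [Module ℝ V] (v w : V) :
    asBilinForm (0 : ExteriorAlgebra ℝ (Module.Dual ℝ V)) v w = 0 := by
  simp [asBilinForm]

end LefAux

open ExteriorAlgebra

namespace LefAux

variable {D : Type*} [AddCommGroup D] [Module ℝ D]

noncomputable def xg (dd : ℕ → D) (i : ℕ) : ExteriorAlgebra ℝ D := ExteriorAlgebra.ι ℝ (dd i)

noncomputable def Pm (dd : ℕ → D) (t : Finset ℕ) : ExteriorAlgebra ℝ D :=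
  ((t.sort (· ≥ ·)).map (xg dd)).prod

noncomputable def Sc (dd : ℕ → D) (c k : ℕ) : Submodule ℝ (ExteriorAlgebra ℝ D) :=
  Submodule.span ℝ {y | ∃ t : Finset ℕ, (∀ i ∈ t, i < c) ∧ t.card = k ∧ y = Pm dd t}

variable (dd : ℕ → D)

lemma xg_sq (i : ℕ) : xg dd i * xg dd i = 0 := ι_sq_zero _

lemma xg_anticomm (i j : ℕ) : xg dd i * xg dd j = -(xg dd j * xg dd i) := by
  have := ι_add_mul_swap (R := ℝ) (dd i) (dd j)
  exact eq_neg_of_add_eq_zero_left this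

lemma Pm_mem_Sc {t : Finset ℕ} {c : ℕ} (h : ∀ i ∈ t, i < c) :
    Pm dd t ∈ Sc dd c t.card :=
  Submodule.subset_span ⟨t, h, rfl, rfl⟩

lemma xg_mul_list (j : ℕ) (l : List ℕ) :
    ∃ r : ℝ, xg dd j * (l.map (xg dd)).prod
      = r • ((l.orderedInsert (· ≥ ·) j).map (xg dd)).prod := by
  induction l with
  | nil => exact ⟨1, by simp⟩
  | cons b l ih =>
    by_cases hjb : j ≥ b
    · exact ⟨1, by simp [List.orderedInsert, hjb]⟩
    · obtain ⟨r, hr⟩ := ih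
      refine ⟨-r, ?_⟩
      simp only [List.orderedInsert, hjb, if_false, List.map_cons, List.prod_cons]
      rw [← mul_assoc, xg_anticomm, neg_mul, mul_assoc, hr]
      simp [mul_smul_comm]

lemma xg_mul_list_zero (j : ℕ) (l : List ℕ) (hl : l.Pairwise (· > ·)) (hj : j ∈ l) :
    xg dd j * (l.map (xg dd)).prod = 0 := by
  induction l with
  | nil => simp at hj
  | cons b l ih =>
    simp only [List.map_cons, List.prod_cons]
    rcases eq_or_ne j b with rfl | hne
    · rw [← mul_assoc, xg_sq, zero_mul]
    · have hjl : j ∈ l := by simpa [hne] using hj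
      rw [← mul_assoc, xg_anticomm, neg_mul, mul_assoc,
        ih hl.of_cons hjl, mul_zero, neg_zero]

end LefAux

namespace LefAux

variable {D : Type*} [AddCommGroup D] [Module ℝ D] (dd : ℕ → D)

lemma sort_insert_top {t : Finset ℕ} {j : ℕ} (h : ∀ b ∈ t, j ≥ b) (hj : j ∉ t) :
    (insert j t).sort (· ≥ ·) = j :: t.sort (· ≥ ·) :=
  Finset.sort_insert _ h hj

lemma orderedInsert_sort {t : Finset ℕ} {j : ℕ} (hj : j ∉ t) :
    (t.sort (· ≥ ·)).orderedInsert (· ≥ ·) j = (insert j t).sort (· ≥ ·) := by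
  refine (fun hp h1 h2 => List.Perm.eq_of_pairwise' h1 h2 hp) ?_ ?_ (Finset.pairwise_sort _ _)
  · refine (List.perm_orderedInsert _ _ _).trans ?_
    refine List.Perm.trans ?_ (Finset.sort_perm_toList _ _).symm
    exact (List.Perm.cons j (Finset.sort_perm_toList _ _)).trans
      (Finset.toList_insert hj).symm
  · exact (Finset.pairwise_sort _ _).orderedInsert _ _

lemma Pm_insert {t : Finset ℕ} {j : ℕ} (h : ∀ b ∈ t, j ≥ b) (hj : j ∉ t) :
    Pm dd (insert j t) = xg dd j * Pm dd t := by
  rw [Pm, sort_insert_top h hj, List.map_cons, List.prod_cons]; rfl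

lemma xg_mul_Pm_mem {c : ℕ} {t : Finset ℕ} {j : ℕ} (hjc : j < c) (ht : ∀ i ∈ t, i < c) :
    xg dd j * Pm dd t ∈ Sc dd c (t.card + 1) := by
  by_cases hj : j ∈ t
  · rw [Pm, xg_mul_list_zero dd j _ (((Finset.pairwise_sort t (· ≥ ·)).and (Finset.sort_nodup t (· ≥ ·))).imp fun h => lt_of_le_of_ne h.1 h.2.symm) ((Finset.mem_sort _).2 hj)]
    exact Submodule.zero_mem _
  · obtain ⟨r, hr⟩ := xg_mul_list dd j (t.sort (· ≥ ·))
    rw [Pm, hr, orderedInsert_sort hj]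
    refine Submodule.smul_mem _ r ?_
    have hmem : Pm dd (insert j t) ∈ Sc dd c (insert j t).card := by
      refine Pm_mem_Sc dd ?_
      intro i hi
      rcases Finset.mem_insert.1 hi with rfl | hi
      exacts [hjc, ht i hi]
    rw [Finset.card_insert_of_notMem hj] at hmem
    exact hmem

lemma Sc_mul_le {c k k' : ℕ} : Sc dd c k * Sc dd c k' ≤ Sc dd c (k + k') := by
  rw [Sc, Sc, Submodule.span_mul_span, Submodule.span_le]
  rintro y ⟨y1, ⟨t1, ht1, hc1, rfl⟩, y2, ⟨t2, ht2, hc2, rfl⟩, rfl⟩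
  have : Pm dd t1 * Pm dd t2
      = (((t1.sort (· ≥ ·)) ++ (t2.sort (· ≥ ·))).map (xg dd)).prod := by
    rw [List.map_append, List.prod_append]; rfl
  simp only [Set.mem_setOf_eq] at *
  show Pm dd t1 * Pm dd t2 ∈ Sc dd c (k + k')
  rw [this]
  have hlen : ((t1.sort (· ≥ ·)) ++ (t2.sort (· ≥ ·))).length = k + k' := by
    simp [Finset.length_sort, hc1, hc2]
  rw [← hlen]
  -- list product membership
  clear this hlen hc1 hc2
  have key : ∀ l : List ℕ, (∀ i ∈ l, i < c) → ((l.map (xg dd)).prod ∈ Sc dd c l.length) := by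
    intro l
    induction l with
    | nil =>
      intro _
      simpa [Pm] using Pm_mem_Sc (t := (∅ : Finset ℕ)) dd (by simp)
    | cons b l ih =>
      intro hl
      simp only [List.map_cons, List.prod_cons, List.length_cons]
      have hb : b < c := hl b List.mem_cons_self
      have hmem := ih (fun i hi => hl i (List.mem_cons_of_mem _ hi))
      -- multiply by xg b on the left, span induction
      refine Submodule.span_induction ?_ ?_ ?_ ?_ hmem
      · rintro y ⟨t, ht, hcard, rfl⟩
        rw [← hcard]
        exact xg_mul_Pm_mem dd hb ht
      · simp
      · intro y z _ _ hy hz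
        rw [mul_add]; exact Submodule.add_mem _ hy hz
      · intro r y _ hy
        rw [mul_smul_comm]; exact Submodule.smul_mem _ _ hy
  have h12 : ∀ i ∈ (t1.sort (· ≥ ·)) ++ (t2.sort (· ≥ ·)), i < c := by
    intro i hi
    rcases List.mem_append.1 hi with hi | hi
    exacts [ht1 i ((Finset.mem_sort _).1 hi), ht2 i ((Finset.mem_sort _).1 hi)]
  exact key _ h12

lemma list_prod_mem {c : ℕ} (l : List ℕ) (hl : ∀ i ∈ l, i < c) :
    (l.map (xg dd)).prod ∈ Sc dd c l.length := by
  induction l with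
  | nil => simpa [Pm] using Pm_mem_Sc (t := (∅ : Finset ℕ)) dd (by simp)
  | cons b l ih =>
    simp only [List.map_cons, List.prod_cons, List.length_cons]
    have hb : xg dd b ∈ Sc dd c 1 := by
      have hPb : Pm dd {b} = xg dd b := by
        simp only [Pm, Finset.sort_singleton, List.map_cons, List.map_nil, List.prod_cons,
          List.prod_nil, mul_one]
      rw [← hPb]
      have := Pm_mem_Sc (t := ({b} : Finset ℕ)) dd
        (by simpa using hl b List.mem_cons_self)
      simpa using this
    have := Sc_mul_le dd (Submodule.mul_mem_mul hb
      (ih fun i hi => hl i (List.mem_cons_of_mem _ hi)))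
    simpa [add_comm] using this

lemma mul_mem_Sc {c k k' : ℕ} {y z : ExteriorAlgebra ℝ D}
    (hy : y ∈ Sc dd c k) (hz : z ∈ Sc dd c k') : y * z ∈ Sc dd c (k + k') :=
  Sc_mul_le dd (Submodule.mul_mem_mul hy hz)

lemma Sc_mono {c c' k : ℕ} (h : c ≤ c') : Sc dd c k ≤ Sc dd c' k := by
  refine Submodule.span_mono ?_
  rintro y ⟨t, ht, hc, rfl⟩
  exact ⟨t, fun i hi => lt_of_lt_of_le (ht i hi) h, hc, rfl⟩

lemma Sc_eq_bot {c k : ℕ} (h : c < k) : Sc dd c k = ⊥ := by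
  rw [Sc, Submodule.span_eq_bot]
  rintro y ⟨t, ht, hc, rfl⟩
  exfalso
  have : t ⊆ Finset.range c := fun i hi => Finset.mem_range.2 (ht i hi)
  have := Finset.card_le_card this
  rw [hc, Finset.card_range] at this
  omega

end LefAux

namespace LefAux

variable {D : Type*} [AddCommGroup D] [Module ℝ D] (dd : ℕ → D)

lemma pair_comm_xg (i j r : ℕ) : Commute (xg dd i * xg dd j) (xg dd r) := by
  show _ = _
  rw [mul_assoc, xg_anticomm dd j r, mul_neg, ← mul_assoc, xg_anticomm dd i r, neg_mul, neg_neg,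
    mul_assoc]

lemma tri_zero (i j : ℕ) : xg dd i * xg dd j * xg dd i = 0 := by
  rw [mul_assoc, xg_anticomm dd j i, mul_neg, ← mul_assoc, xg_sq, zero_mul, neg_zero]

/-- The standard symplectic element using pairs `(2i, 2i+1)`, `i < m`. -/
noncomputable def Om (m : ℕ) : ExteriorAlgebra ℝ D :=
  ∑ i ∈ Finset.range m, xg dd (2*i+1) * xg dd (2*i)

lemma Om_comm_xg (m r : ℕ) : Commute (Om dd m) (xg dd r) :=
  Commute.sum_left _ _ _ fun i _ => pair_comm_xg dd _ _ r

lemma Om_comm_pair (m i j : ℕ) : Commute (Om dd m) (xg dd i * xg dd j) :=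
  ((Om_comm_xg dd m i).mul_right (Om_comm_xg dd m j))

lemma Om_succ (m : ℕ) : Om dd (m+1) = Om dd m + xg dd (2*m+1) * xg dd (2*m) := by
  rw [Om, Finset.sum_range_succ]; rfl

lemma Om_mem (m : ℕ) : Om dd m ∈ Sc dd (2*m) 2 := by
  refine Submodule.sum_mem _ fun i hi => ?_
  have hi' : i < m := Finset.mem_range.1 hi
  have hp : Pm dd ({2*i, 2*i+1} : Finset ℕ) = xg dd (2*i+1) * xg dd (2*i) := by
    have : ({2*i, 2*i+1} : Finset ℕ) = insert (2*i+1) ({2*i} : Finset ℕ) := by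
      rw [Finset.pair_comm]
    rw [this, Pm_insert dd (by simp) (by simp), Pm]
    simp only [Finset.sort_singleton, List.map_cons, List.map_nil, List.prod_cons, List.prod_nil,
      mul_one]
  rw [← hp]
  have hcard : ({2*i, 2*i+1} : Finset ℕ).card = 2 := by
    rw [Finset.card_insert_of_notMem (by simp), Finset.card_singleton]
  have hlt : ∀ x ∈ ({2*i, 2*i+1} : Finset ℕ), x < 2*m := by
    intro x hx
    simp only [Finset.mem_insert, Finset.mem_singleton] at hx
    rcases hx with rfl | rfl <;> omega
  have hmem := Pm_mem_Sc dd hlt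
  rwa [hcard] at hmem

lemma Om_pow_mem (m s : ℕ) : (Om dd m) ^ s ∈ Sc dd (2*m) (2*s) := by
  induction s with
  | zero =>
    have h0 := Pm_mem_Sc (t := (∅ : Finset ℕ)) (c := 2*m) dd (by simp)
    rw [pow_zero]
    simpa [Pm] using h0
  | succ s ih =>
    rw [pow_succ]
    have := mul_mem_Sc dd ih (Om_mem dd m)
    rwa [show 2*s + 2 = 2*(s+1) by ring] at this

lemma pow_binom {R : Type*} [Ring R] {A B : R} (h : A * B = B * A) (hB : B * B = 0) (s : ℕ) :
    (A + B) ^ (s+1) = A^(s+1) + (s+1) • (A^s * B) := by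
  induction s with
  | zero => simp
  | succ s ih =>
    rw [pow_succ (A+B) (s+1), ih, add_mul, mul_add, mul_add, smul_mul_assoc, smul_mul_assoc,
      mul_assoc (A^s) B A, ← h, ← mul_assoc (A^s) A B, mul_assoc (A^s) B B, hB, mul_zero,
      smul_zero, add_zero, ← pow_succ A (s+1), ← pow_succ A s,
      succ_nsmul (A^(s+1) * B) (s+1)]
    abel

lemma decomp {c n : ℕ} {y : ExteriorAlgebra ℝ D} (hy : y ∈ Sc dd (c+2) n) :
    ∃ y0 ∈ Sc dd c n, ∃ y1 ∈ Sc dd c (n-1), ∃ y2 ∈ Sc dd c (n-1), ∃ y3 ∈ Sc dd c (n-2),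
      y = y0 + xg dd (c+1) * y1 + xg dd c * y2 + (xg dd (c+1) * xg dd c) * y3 := by
  refine Submodule.span_induction ?_ ?_ ?_ ?_ hy
  · rintro y ⟨t, ht, hcard, rfl⟩
    by_cases h1 : c+1 ∈ t <;> by_cases h2 : c ∈ t
    · -- both
      set t' := (t.erase (c+1)).erase c with ht'
      have hc1 : c ∈ t.erase (c+1) := Finset.mem_erase.2 ⟨by omega, h2⟩
      have e1 : insert c t' = t.erase (c+1) := Finset.insert_erase hc1
      have e2 : insert (c+1) (t.erase (c+1)) = t := Finset.insert_erase h1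
      have htlt : ∀ i ∈ t', i < c := by
        intro i hi
        simp only [ht', Finset.mem_erase] at hi
        have := ht i hi.2.2
        omega
      have hcard' : t'.card = n - 2 := by
        rw [ht', Finset.card_erase_of_mem (Finset.mem_erase.2 ⟨by omega, h2⟩),
          Finset.card_erase_of_mem h1, hcard]
        omega
      have hP : Pm dd t = (xg dd (c+1) * xg dd c) * Pm dd t' := by
        rw [← e2, Pm_insert dd (fun b hb => by
            have := Finset.mem_erase.1 hb; have := ht b this.2; omega) (by simp),
          ← e1, Pm_insert dd (fun b hb => le_of_lt (htlt b hb)) (by simp [ht']),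
          mul_assoc]
      refine ⟨0, Submodule.zero_mem _, 0, Submodule.zero_mem _, 0, Submodule.zero_mem _,
        Pm dd t', ?_, by rw [hP]; simp⟩
      rw [← hcard']; exact Pm_mem_Sc dd htlt
    · -- only c+1
      set t' := t.erase (c+1) with ht'
      have e2 : insert (c+1) t' = t := Finset.insert_erase h1
      have htlt : ∀ i ∈ t', i < c := by
        intro i hi
        simp only [ht', Finset.mem_erase] at hi
        have := ht i hi.2
        rcases Nat.lt_or_ge i c with h | h
        · exact h
        · exfalso; have : i = c ∨ i = c+1 := by omega
          rcases this with rfl | rfl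
          exacts [h2 hi.2, hi.1 rfl]
      have hcard' : t'.card = n - 1 := by rw [ht', Finset.card_erase_of_mem h1, hcard]
      have hP : Pm dd t = xg dd (c+1) * Pm dd t' := by
        rw [← e2, Pm_insert dd (fun b hb => le_of_lt (by have := htlt b hb; omega)) (by simp [ht'])]
      refine ⟨0, Submodule.zero_mem _, Pm dd t', ?_, 0, Submodule.zero_mem _,
        0, Submodule.zero_mem _, by rw [hP]; simp⟩
      rw [← hcard']; exact Pm_mem_Sc dd htlt
    · -- only c
      set t' := t.erase c with ht'
      have e2 : insert c t' = t := Finset.insert_erase h2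
      have htlt : ∀ i ∈ t', i < c := by
        intro i hi
        simp only [ht', Finset.mem_erase] at hi
        have := ht i hi.2
        rcases Nat.lt_or_ge i c with h | h
        · exact h
        · exfalso; have : i = c ∨ i = c+1 := by omega
          rcases this with rfl | rfl
          exacts [hi.1 rfl, h1 hi.2]
      have hcard' : t'.card = n - 1 := by rw [ht', Finset.card_erase_of_mem h2, hcard]
      have hP : Pm dd t = xg dd c * Pm dd t' := by
        rw [← e2, Pm_insert dd (fun b hb => le_of_lt (htlt b hb)) (by simp [ht'])]
      refine ⟨0, Submodule.zero_mem _, 0, Submodule.zero_mem _, Pm dd t', ?_,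
        0, Submodule.zero_mem _, by rw [hP]; simp⟩
      rw [← hcard']; exact Pm_mem_Sc dd htlt
    · -- neither
      have htlt : ∀ i ∈ t, i < c := by
        intro i hi
        have := ht i hi
        rcases Nat.lt_or_ge i c with h | h
        · exact h
        · exfalso; have : i = c ∨ i = c+1 := by omega
          rcases this with rfl | rfl
          exacts [h2 hi, h1 hi]
      refine ⟨Pm dd t, ?_, 0, Submodule.zero_mem _, 0, Submodule.zero_mem _,
        0, Submodule.zero_mem _, by simp⟩
      rw [← hcard]; exact Pm_mem_Sc dd htlt
  · exact ⟨0, Submodule.zero_mem _, 0, Submodule.zero_mem _, 0, Submodule.zero_mem _,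
      0, Submodule.zero_mem _, by simp⟩
  · rintro y z _ _ ⟨y0, hy0, y1, hy1, y2, hy2, y3, hy3, rfl⟩ ⟨z0, hz0, z1, hz1, z2, hz2, z3, hz3, rfl⟩
    exact ⟨y0 + z0, Submodule.add_mem _ hy0 hz0, y1 + z1, Submodule.add_mem _ hy1 hz1,
      y2 + z2, Submodule.add_mem _ hy2 hz2, y3 + z3, Submodule.add_mem _ hy3 hz3, by
        rw [mul_add, mul_add, mul_add]; abel⟩
  · rintro r y _ ⟨y0, hy0, y1, hy1, y2, hy2, y3, hy3, rfl⟩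
    exact ⟨r • y0, Submodule.smul_mem _ _ hy0, r • y1, Submodule.smul_mem _ _ hy1,
      r • y2, Submodule.smul_mem _ _ hy2, r • y3, Submodule.smul_mem _ _ hy3, by
        rw [mul_smul_comm, mul_smul_comm, mul_smul_comm, smul_add, smul_add, smul_add]⟩

end LefAux

namespace LefAux

variable {D : Type*} [AddCommGroup D] [Module ℝ D] (dd : ℕ → D)

lemma single_mem {j c : ℕ} (hj : j < c) : xg dd j ∈ Sc dd c 1 := by
  have hPb : Pm dd {j} = xg dd j := by
    simp only [Pm, Finset.sort_singleton, List.map_cons, List.map_nil, List.prod_cons,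
      List.prod_nil, mul_one]
  rw [← hPb]
  have := Pm_mem_Sc (t := ({j} : Finset ℕ)) dd (by simpa using hj)
  simpa using this

lemma pair_mem {p q c : ℕ} (hpq : p < q) (hq : q < c) :
    xg dd q * xg dd p ∈ Sc dd c 2 := by
  have := mul_mem_Sc dd (single_mem dd hq) (single_mem dd (lt_trans hpq hq))
  simpa using this

set_option maxHeartbeats 2000000 in
theorem main_induction : ∀ m s K : ℕ, m ≤ K + s →
    ∀ γ ∈ Sc dd (2*m) (K + 2*s), ∃ α ∈ Sc dd (2*m) K, (Om dd m)^s * α = γ := by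
  intro m
  induction m with
  | zero =>
    intro s K _ γ hγ
    rcases Nat.eq_zero_or_pos s with rfl | hs
    · exact ⟨γ, by simpa using hγ, by simp⟩
    · have hbot : Sc dd (2*0) (K + 2*s) = ⊥ := Sc_eq_bot dd (by omega)
      rw [hbot, Submodule.mem_bot] at hγ
      exact ⟨0, Submodule.zero_mem _, by simp [hγ]⟩
  | succ m IH =>
    intro s K hms γ hγ
    rcases Nat.eq_zero_or_pos s with rfl | hs
    · exact ⟨γ, by simpa using hγ, by simp⟩
    obtain ⟨s', rfl⟩ : ∃ s', s = s' + 1 := ⟨s - 1, by omega⟩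
    set s := s' + 1 with hsdef
    set A := Om dd m with hA
    set a := xg dd (2*m+1) with ha
    set b := xg dd (2*m) with hb
    set B := a * b with hB
    have hBa : B * a = 0 := tri_zero dd _ _
    have hBb : B * b = 0 := by rw [hB, mul_assoc, xg_sq, mul_zero]
    have hBB : B * B = 0 := by rw [hB, ← mul_assoc, hBa, zero_mul]
    have hAB : A * B = B * A := Om_comm_pair dd m _ _
    -- decompose γ
    have hγ' : γ ∈ Sc dd (2*m + 2) (K + 2*s) := by
      have : 2*(m+1) = 2*m+2 := by ring
      rwa [this] at hγ
    obtain ⟨γ0, hγ0, γ1, hγ1, γ2, hγ2, γ3, hγ3, hγeq⟩ := decomp dd hγ'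
    have hd1 : K + 2*s - 1 = (K-1) + 2*s ∨ K = 0 := by omega
    -- solve for α1
    have solve1 : ∀ γ' ∈ Sc dd (2*m) (K + 2*s - 1),
        ∃ α' ∈ Sc dd (2*m) (K-1), A^s * α' = γ' ∧ (K = 0 → α' = 0) := by
      intro γ' hγ'
      rcases Nat.eq_zero_or_pos K with rfl | hK
      · have hbot : Sc dd (2*m) (0 + 2*s - 1) = ⊥ := Sc_eq_bot dd (by omega)
        rw [hbot, Submodule.mem_bot] at hγ'
        exact ⟨0, Submodule.zero_mem _, by simp [hγ'], fun _ => rfl⟩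
      · have he : K + 2*s - 1 = (K-1) + 2*s := by omega
        rw [he] at hγ'
        obtain ⟨α', h1, h2⟩ := IH s (K-1) (by omega) γ' hγ'
        exact ⟨α', h1, h2, fun h => by omega⟩
    obtain ⟨α1, hα1, he1, hz1⟩ := solve1 γ1 hγ1
    obtain ⟨α2, hα2, he2, hz2⟩ := solve1 γ2 hγ2
    -- solve for δ
    have hγ3' : γ3 ∈ Sc dd (2*m) (K + 2*s') := by
      have he : K + 2*s - 2 = K + 2*s' := by omega
      rwa [he] at hγ3
    obtain ⟨δ, hδ, heδ⟩ := IH s' K (by omega) γ3 hγ3'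
    -- solve for α3
    have hsR : ((s:ℕ) : ℝ) ≠ 0 := by positivity
    obtain ⟨α3, hAα3, hBα3, heq3⟩ :
        ∃ α3, (A * α3 ∈ Sc dd (2*m) K) ∧ (B * α3 ∈ Sc dd (2*m+2) K) ∧
          A^(s+1) * α3 = A^s * δ - ((s:ℕ):ℝ) • γ0 := by
      by_cases hK2 : 2 ≤ K
      · have hρ : A^s * δ - ((s:ℕ):ℝ) • γ0 ∈ Sc dd (2*m) ((K-2) + 2*(s+1)) := by
          have h1 : A^s * δ ∈ Sc dd (2*m) (2*s + K) := mul_mem_Sc dd (Om_pow_mem dd m s) hδ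
          have he : (K-2) + 2*(s+1) = 2*s + K := by omega
          rw [he]
          refine Submodule.sub_mem _ h1 ?_
          have he2 : 2*s + K = K + 2*s := by omega
          rw [he2]; exact Submodule.smul_mem _ _ hγ0
        obtain ⟨α3, hα3, he3⟩ := IH (s+1) (K-2) (by omega) _ hρ
        refine ⟨α3, ?_, ?_, he3⟩
        · have := mul_mem_Sc dd (Om_mem dd m) hα3
          rwa [show 2 + (K-2) = K by omega] at this
        · have hBmem : B ∈ Sc dd (2*m+2) 2 := pair_mem dd (by omega) (by omega)
          have := mul_mem_Sc dd hBmem (Sc_mono dd (by omega) hα3)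
          rwa [show 2 + (K-2) = K by omega] at this
      · have hbot : Sc dd (2*m) (K + 2*s) = ⊥ := Sc_eq_bot dd (by omega)
        have hγ00 : γ0 = 0 := by rw [hbot, Submodule.mem_bot] at hγ0; exact hγ0
        have hAδ : A^s * δ = 0 := by
          have h1 : A^s * δ ∈ Sc dd (2*m) (2*s + K) := mul_mem_Sc dd (Om_pow_mem dd m s) hδ
          rw [show 2*s + K = K + 2*s by omega, hbot, Submodule.mem_bot] at h1
          exact h1
        exact ⟨0, by simpa using Submodule.zero_mem _, by simpa using Submodule.zero_mem _,
          by simp [hγ00, hAδ]⟩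
    -- define α0
    set α0 : ExteriorAlgebra ℝ D := (((s:ℕ):ℝ))⁻¹ • (δ - A * α3) with hα0def
    have hα0 : α0 ∈ Sc dd (2*m) K :=
      Submodule.smul_mem _ _ (Submodule.sub_mem _ hδ hAα3)
    have he0 : A^s * α0 = γ0 := by
      rw [hα0def, mul_smul_comm, mul_sub, ← mul_assoc, ← pow_succ, heq3]
      rw [sub_sub_cancel, inv_smul_smul₀ hsR]
    have he3' : A^s * α3 + ((s:ℕ):ℝ) • (A^s' * α0) = γ3 := by
      have : A^s' * α0 = (((s:ℕ):ℝ))⁻¹ • (γ3 - A^s * α3) := by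
        rw [hα0def, mul_smul_comm, mul_sub, ← mul_assoc, ← pow_succ, heδ]
      rw [this, smul_inv_smul₀ hsR]
      abel
    -- assemble
    set α : ExteriorAlgebra ℝ D := α0 + a * α1 + b * α2 + B * α3 with hαdef
    have hαmem : α ∈ Sc dd (2*(m+1)) K := by
      rw [show 2*(m+1) = 2*m+2 by ring]
      have m0 : α0 ∈ Sc dd (2*m+2) K := Sc_mono dd (by omega) hα0
      have m1 : a * α1 ∈ Sc dd (2*m+2) K := by
        rcases Nat.eq_zero_or_pos K with rfl | hK
        · rw [hz1 rfl, mul_zero]; exact Submodule.zero_mem _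
        · have := mul_mem_Sc dd (single_mem dd (c := 2*m+2) (j := 2*m+1) (by omega))
            (Sc_mono dd (by omega) hα1)
          rwa [show 1 + (K-1) = K by omega] at this
      have m2 : b * α2 ∈ Sc dd (2*m+2) K := by
        rcases Nat.eq_zero_or_pos K with rfl | hK
        · rw [hz2 rfl, mul_zero]; exact Submodule.zero_mem _
        · have := mul_mem_Sc dd (single_mem dd (c := 2*m+2) (j := 2*m) (by omega))
            (Sc_mono dd (by omega) hα2)
          rwa [show 1 + (K-1) = K by omega] at this
      exact Submodule.add_mem _ (Submodule.add_mem _ (Submodule.add_mem _ m0 m1) m2) hBα3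
    refine ⟨α, hαmem, ?_⟩
    -- the computation
    have hpow : (Om dd (m+1))^s = A^s + ((s:ℕ):ℝ) • (A^s' * B) := by
      rw [Om_succ, ← ha, ← hb, ← hB, pow_binom hAB hBB s', ← Nat.cast_smul_eq_nsmul ℝ]
    have swap : ∀ (u : ℕ) (z w : ExteriorAlgebra ℝ D),
        A^u * z = z * A^u → A^u * (z * w) = z * (A^u * w) := by
      intro u z w h
      rw [← mul_assoc, h, mul_assoc]
    have cAa : ∀ u : ℕ, A^u * a = a * A^u := fun u =>
      ((Om_comm_xg dd m (2*m+1)).pow_left u).eq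
    have cAb : ∀ u : ℕ, A^u * b = b * A^u := fun u =>
      ((Om_comm_xg dd m (2*m)).pow_left u).eq
    have cABu : ∀ u : ℕ, A^u * B = B * A^u := fun u =>
      ((Om_comm_pair dd m _ _).pow_left u).eq
    have main1 : A^s * α = γ0 + a * γ1 + b * γ2 + B * (A^s * α3) := by
      rw [hαdef, mul_add, mul_add, mul_add, he0,
        swap s a α1 (cAa s), he1, swap s b α2 (cAb s), he2, swap s B α3 (cABu s)]
    have main2 : (A^s' * B) * α = B * (A^s' * α0) := by
      have k1 : (A^s' * B) * (a * α1) = 0 := by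
        rw [mul_assoc, ← mul_assoc B a α1, hBa, zero_mul, mul_zero]
      have k2 : (A^s' * B) * (b * α2) = 0 := by
        rw [mul_assoc, ← mul_assoc B b α2, hBb, zero_mul, mul_zero]
      have k3 : (A^s' * B) * (B * α3) = 0 := by
        rw [mul_assoc, ← mul_assoc B B α3, hBB, zero_mul, mul_zero]
      rw [hαdef, mul_add, mul_add, mul_add, k1, k2, k3, add_zero, add_zero, add_zero,
        cABu s', mul_assoc]
    rw [hpow, add_mul, main1, smul_mul_assoc, main2, hγeq]
    have : B * (A^s * α3) + ((s:ℕ):ℝ) • (B * (A^s' * α0)) = B * γ3 := by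
      rw [← mul_smul_comm, ← mul_add, he3']
    rw [add_assoc, this]

end LefAux

namespace LefAux

noncomputable def eps (p q : ℕ) : ℝ :=
  if p = q + 1 ∧ p % 2 = 1 then 1 else if q = p + 1 ∧ q % 2 = 1 then -1 else 0

lemma skew {V : Type*} [AddCommGroup V] [Module ℝ V] (ω : V →ₗ[ℝ] V →ₗ[ℝ] ℝ)
    (halt : ∀ v : V, ω v v = 0) (a b : V) : ω a b = -ω b a := by
  have h := halt (a + b)
  simp only [map_add, LinearMap.add_apply, halt a, halt b] at h
  linarith

universe u

theorem exists_sympl : ∀ (m : ℕ) (V : Type u) [AddCommGroup V] [Module ℝ V]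
    [FiniteDimensional ℝ V] (ω : V →ₗ[ℝ] V →ₗ[ℝ] ℝ),
    (∀ v : V, ω v v = 0) → (∀ v : V, (∀ w : V, ω v w = 0) → v = 0) →
    Module.finrank ℝ V = 2*m →
    ∃ e : ℕ → V, ∀ p q, p < 2*m → q < 2*m → ω (e p) (e q) = eps p q := by
  intro m
  induction m with
  | zero => intro V _ _ _ ω _ _ _; exact ⟨fun _ => 0, fun p q hp _ => by omega⟩
  | succ m IH =>
    intro V _ _ _ ω halt hnondeg hdim
    have hnt : Nontrivial V := by
      have : 0 < Module.finrank ℝ V := by omega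
      exact Module.nontrivial_of_finrank_pos this
    obtain ⟨u, hu⟩ := exists_ne (0 : V)
    have : ∃ w, ω u w ≠ 0 := by
      by_contra h
      push_neg at h
      exact hu (hnondeg u h)
    obtain ⟨w, hw⟩ := this
    set v : V := (ω u w)⁻¹ • w with hv
    have huv : ω u v = 1 := by
      rw [hv, map_smul, smul_eq_mul, inv_mul_cancel₀ hw]
    have hvu : ω v u = -1 := by rw [skew ω halt, huv]
    set g : V →ₗ[ℝ] ℝ × ℝ := LinearMap.prod (ω u) (ω v) with hg
    have hgsurj : Function.Surjective g := by
      rintro ⟨c1, c2⟩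
      refine ⟨c1 • v - c2 • u, ?_⟩
      have h1 : ω u (c1 • v - c2 • u) = c1 := by
        simp [map_sub, map_smul, huv, halt u]
      have h2 : ω v (c1 • v - c2 • u) = c2 := by
        simp [map_sub, map_smul, halt v, hvu]
      simp [hg, LinearMap.prod_apply, h1, h2]
    set W : Submodule ℝ V := LinearMap.ker g with hW
    have hWmem : ∀ y : V, y ∈ W ↔ ω u y = 0 ∧ ω v y = 0 := by
      intro y
      rw [hW, LinearMap.mem_ker, hg, LinearMap.prod_apply, Prod.mk_eq_zero]
      rfl
    have hWdim : Module.finrank ℝ W = 2*m := by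
      have hrk := LinearMap.finrank_range_add_finrank_ker g
      rw [LinearMap.range_eq_top.2 hgsurj, finrank_top] at hrk
      have h2 : Module.finrank ℝ (ℝ × ℝ) = 2 := by
        simp [Module.finrank_prod]
      rw [h2, ← hW] at hrk
      omega
    set ω' : W →ₗ[ℝ] W →ₗ[ℝ] ℝ := LinearMap.domRestrict₁₂ ω W W with hω'
    have hω'apply : ∀ (y z : W), ω' y z = ω (y : V) (z : V) := fun _ _ => rfl
    have halt' : ∀ y : W, ω' y y = 0 := fun y => halt (y : V)
    have hnondeg' : ∀ y : W, (∀ z : W, ω' y z = 0) → y = 0 := by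
      intro y hy
      have key : ∀ z : V, ω (y : V) z = 0 := by
        intro z
        have hdec : z - (ω u z) • v + (ω v z) • u ∈ W := by
          rw [hWmem]
          constructor
          · simp [map_sub, map_add, map_smul, huv, halt u]
          · simp [map_sub, map_add, map_smul, halt v, hvu]
        have h0 := hy ⟨_, hdec⟩
        rw [hω'apply] at h0
        simp only [map_sub, map_add, map_smul, smul_eq_mul] at h0
        have hyu : ω (y : V) u = 0 := by
          rw [skew ω halt]
          have := ((hWmem (y : V)).1 y.2).1
          rw [this]; ring
        have hyv : ω (y : V) v = 0 := by
          rw [skew ω halt]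
          have := ((hWmem (y : V)).1 y.2).2
          rw [this]; ring
        rw [hyu, hyv] at h0
        simpa using h0
      have : (y : V) = 0 := hnondeg _ key
      exact Subtype.ext this
    obtain ⟨e', he'⟩ := IH W ω' halt' hnondeg' hWdim
    set E : ℕ → V := fun i => if i < 2*m then (e' i : V) else if i = 2*m then v else u
      with hE
    have hE1 : ∀ i, i < 2*m → E i = (e' i : V) := by
      intro i h; simp only [hE, if_pos h]
    have hE2 : E (2*m) = v := by
      simp only [hE, lt_irrefl, if_false, if_pos rfl]
      simp
    have hE3 : E (2*m+1) = u := by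
      have h1 : ¬ (2*m+1 < 2*m) := by omega
      have h2 : ¬ (2*m+1 = 2*m) := by omega
      simp only [hE, if_neg h1, if_neg h2]
    refine ⟨E, ?_⟩
    intro p q hp hq
    have hucross : ∀ i, i < 2*m → ω u (e' i : V) = 0 ∧ ω v (e' i : V) = 0 :=
      fun i _ => (hWmem _).1 (e' i).2
    have hp3 : p < 2*m ∨ p = 2*m ∨ p = 2*m+1 := by omega
    have hq3 : q < 2*m ∨ q = 2*m ∨ q = 2*m+1 := by omega
    rcases hp3 with hp' | hp' | hp' <;> rcases hq3 with hq' | hq' | hq'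
    · rw [hE1 p hp', hE1 q hq', ← hω'apply, he' p q hp' hq']
    · subst hq'
      rw [hE1 p hp', hE2, skew ω halt, (hucross p hp').2, eps,
        if_neg (by omega), if_neg (by omega)]
      ring
    · subst hq'
      rw [hE1 p hp', hE3, skew ω halt, (hucross p hp').1, eps,
        if_neg (by omega), if_neg (by omega)]
      ring
    · subst hp'
      rw [hE2, hE1 q hq', (hucross q hq').2, eps, if_neg (by omega), if_neg (by omega)]
    · subst hp'; subst hq'
      rw [hE2, halt v, eps, if_neg (by omega), if_neg (by omega)]
    · subst hp'; subst hq'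
      rw [hE2, hE3, hvu, eps, if_neg (by omega), if_pos (by omega)]
    · subst hp'
      rw [hE3, hE1 q hq', (hucross q hq').1, eps, if_neg (by omega), if_neg (by omega)]
    · subst hp'; subst hq'
      rw [hE3, hE2, huv, eps, if_pos (by omega)]
    · subst hp'; subst hq'
      rw [hE3, halt u, eps, if_neg (by omega), if_neg (by omega)]

end LefAux

namespace LefAux

open ExteriorAlgebra

variable {D : Type*} [AddCommGroup D] [Module ℝ D]

lemma Sc_le_ext (dd : ℕ → D) (c k : ℕ) : Sc dd c k ≤ ⋀[ℝ]^k D := by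
  rw [Sc, Submodule.span_le]
  rintro y ⟨t, ht, hcard, rfl⟩
  have key : ∀ l : List ℕ, (l.map (xg dd)).prod ∈ ⋀[ℝ]^(l.length) D := by
    intro l
    induction l with
    | nil =>
      simp only [List.map_nil, List.prod_nil, List.length_nil]
      rw [exteriorPower, pow_zero]
      exact Submodule.one_le.1 le_rfl
    | cons b l ih =>
      simp only [List.map_cons, List.prod_cons, List.length_cons]
      rw [exteriorPower, pow_succ']
      exact Submodule.mul_mem_mul (LinearMap.mem_range_self _ _) ih
  have h := key (t.sort (· ≥ ·))
  rw [Finset.length_sort] at h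
  rw [SetLike.mem_coe, ← hcard]
  exact h

lemma ext_le_Sc {N : ℕ} (bD : Module.Basis (Fin N) ℝ D) (n : ℕ) :
    ⋀[ℝ]^n D ≤ Sc (fun i => if h : i < N then bD ⟨i, h⟩ else 0) N n := by
  set dd : ℕ → D := fun i => if h : i < N then bD ⟨i, h⟩ else 0 with hdd
  have hddval : ∀ i : Fin N, dd (i : ℕ) = bD i := by
    intro i
    simp only [hdd, dif_pos i.isLt]
  rw [← ιMulti_span_fixedDegree, Submodule.span_le]
  rintro _ ⟨v, rfl⟩
  have hv : (ιMulti ℝ n (M := D)) v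
      = (ιMulti ℝ n (M := D)).toMultilinearMap (fun j => ∑ i : Fin N, bD.repr (v j) i • bD i) := by
    rw [AlternatingMap.coe_multilinearMap]
    congr 1
    funext j
    rw [Module.Basis.sum_repr]
  rw [SetLike.mem_coe, hv, MultilinearMap.map_sum]
  refine Submodule.sum_mem _ fun r _ => ?_
  rw [MultilinearMap.map_smul_univ]
  refine Submodule.smul_mem _ _ ?_
  have hmono : (ιMulti ℝ n (M := D)).toMultilinearMap (fun j => bD (r j))
      = ((List.ofFn (fun j => ((r j : ℕ)))).map (xg dd)).prod := by
    rw [AlternatingMap.coe_multilinearMap, ιMulti_apply, List.map_ofFn]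
    refine congrArg List.prod (congrArg List.ofFn (funext fun i => ?_))
    show ExteriorAlgebra.ι ℝ (bD (r i)) = xg dd ((r i : ℕ))
    rw [xg, hddval]
  rw [hmono]
  have hlt : ∀ i ∈ List.ofFn (fun j => ((r j : ℕ))), i < N := by
    intro i hi
    rw [List.mem_ofFn] at hi
    obtain ⟨j, rfl⟩ := hi
    exact (r j).isLt
  have := list_prod_mem dd _ hlt
  rwa [List.length_ofFn] at this

end LefAux

namespace LefAux

open ExteriorAlgebra

variable {V : Type*} [AddCommGroup V] [Module ℝ V]

lemma Pm_pair {D : Type*} [AddCommGroup D] [Module ℝ D] (dd : ℕ → D) {p q : ℕ} (h : q < p) :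
    Pm dd {q, p} = xg dd p * xg dd q := by
  rw [Finset.pair_comm, Pm_insert dd (by simp; omega) (by simp; omega), Pm]
  simp only [Finset.sort_singleton, List.map_cons, List.map_nil, List.prod_cons, List.prod_nil,
    mul_one]

lemma sc2_repr {N : ℕ} (bb : Module.Basis (Fin N) ℝ V)
    (ξ : ExteriorAlgebra ℝ (Module.Dual ℝ V))
    (hξ : ξ ∈ Sc (fun i => if h : i < N then bb.dualBasis ⟨i, h⟩ else 0) N 2) :
    ξ = ∑ z ∈ Finset.univ.filter (fun z : Fin N × Fin N => z.2 < z.1),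
        asBilinForm ξ (bb z.1) (bb z.2) •
          (xg (fun i => if h : i < N then bb.dualBasis ⟨i, h⟩ else 0) (z.1 : ℕ)
            * xg (fun i => if h : i < N then bb.dualBasis ⟨i, h⟩ else 0) (z.2 : ℕ)) := by
  set dd : ℕ → Module.Dual ℝ V := fun i => if h : i < N then bb.dualBasis ⟨i, h⟩ else 0 with hdd
  have hddval : ∀ i : Fin N, dd (i : ℕ) = bb.dualBasis i := fun i => by
    simp only [hdd, dif_pos i.isLt]
  have hxg : ∀ (i : Fin N), xg dd (i : ℕ) = ExteriorAlgebra.ι ℝ (bb.dualBasis i) := by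
    intro i; rw [xg, hddval]
  have hbil : ∀ (p q : Fin N) (u v : Fin N),
      asBilinForm (xg dd (p : ℕ) * xg dd (q : ℕ)) (bb u) (bb v)
        = (if u = p then (1:ℝ) else 0) * (if v = q then 1 else 0)
          - (if u = q then (1:ℝ) else 0) * (if v = p then 1 else 0) := by
    intro p q u v
    rw [hxg, hxg, asBilinForm_prod, Module.Basis.dualBasis_apply_self, Module.Basis.dualBasis_apply_self,
      Module.Basis.dualBasis_apply_self, Module.Basis.dualBasis_apply_self]
  refine Submodule.span_induction ?_ ?_ ?_ ?_ hξ
  · rintro y ⟨t, ht, hcard, rfl⟩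
    obtain ⟨a, b, hab, rfl⟩ := Finset.card_eq_two.1 hcard
    -- normalize to q < p
    obtain ⟨p, q, hqp, habt⟩ : ∃ p q : ℕ, q < p ∧ ({a, b} : Finset ℕ) = {q, p} := by
      rcases lt_or_gt_of_ne hab with h | h
      · exact ⟨b, a, h, rfl⟩
      · exact ⟨a, b, h, Finset.pair_comm a b⟩
    rw [habt, Pm_pair _ hqp]
    have hpN : p < N := ht p (by rw [habt]; simp)
    have hqN : q < N := ht q (by rw [habt]; simp)
    set p' : Fin N := ⟨p, hpN⟩
    set q' : Fin N := ⟨q, hqN⟩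
    have hcoef : ∀ z : Fin N × Fin N, z.2 < z.1 →
        asBilinForm (xg dd p * xg dd q) (bb z.1) (bb z.2)
          = if z = (p', q') then 1 else 0 := by
      intro z hz
      have hb := hbil p' q' z.1 z.2
      rw [hb]
      by_cases h1 : z = (p', q')
      · subst h1
        rw [if_pos rfl, if_pos rfl, if_pos rfl]
        have hne : ¬ ((p', q').1 = q') := by
          intro h; exact absurd (congrArg Fin.val h : p = q) (Nat.ne_of_gt hqp)
        rw [if_neg hne]
        simp
      · rw [if_neg h1]
        by_cases h2 : z.1 = p'
        · have h3 : ¬ (z.2 = q') := by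
            intro h3; exact h1 (Prod.ext h2 h3)
          have h4 : ¬ (z.1 = q') := by
            intro h4
            rw [h2] at h4
            exact absurd (congrArg Fin.val h4 : p = q) (Nat.ne_of_gt hqp)
          rw [if_pos h2, if_neg h3, if_neg h4]
          ring
        · rw [if_neg h2]
          by_cases h6 : z.1 = q'
          · have h5 : ¬ (z.2 = p') := by
              intro h5
              have hlt : (z.2 : ℕ) < (z.1 : ℕ) := hz
              rw [h5, h6] at hlt
              change p < q at hlt
              omega
            rw [if_neg h5]
            ring
          · rw [if_neg h6]
            ring
    have hmem : (p', q') ∈ Finset.univ.filter (fun z : Fin N × Fin N => z.2 < z.1) := by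
      simp only [Finset.mem_filter, Finset.mem_univ, true_and]
      exact hqp
    rw [Finset.sum_eq_single_of_mem (p', q') hmem (fun z hz hne => by
      rw [hcoef z (Finset.mem_filter.1 hz).2, if_neg hne, zero_smul])]
    rw [hcoef (p', q') hqp, if_pos rfl, one_smul]
  · simp only [asBilinForm_zero, zero_smul, Finset.sum_const_zero]
  · intro y z _ _ hy hz
    conv_lhs => rw [hy, hz]
    rw [← Finset.sum_add_distrib]
    refine Finset.sum_congr rfl fun w _ => ?_
    rw [asBilinForm_add, add_smul]
  · intro r y _ hy
    conv_lhs => rw [hy]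
    rw [Finset.smul_sum]
    refine Finset.sum_congr rfl fun w _ => ?_
    rw [asBilinForm_smul, mul_smul]

end LefAux

namespace LefAux

lemma eps_even {j i : ℕ} (h : j % 2 = 0) : eps (j+1) i = if i = j then 1 else 0 := by
  rcases eq_or_ne i j with rfl | hne
  · rw [if_pos rfl, eps, if_pos (by omega)]
  · rw [if_neg hne, eps, if_neg (by omega), if_neg (by omega)]

lemma eps_odd {j i : ℕ} (h : j % 2 = 1) : eps (j-1) i = if i = j then -1 else 0 := by
  rcases eq_or_ne i j with rfl | hne
  · rw [if_pos rfl, eps, if_neg (by omega), if_pos (by omega)]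
  · rw [if_neg hne, eps, if_neg (by omega), if_neg (by omega)]

lemma sympl_li {V : Type*} [AddCommGroup V] [Module ℝ V]
    (ω : V →ₗ[ℝ] V →ₗ[ℝ] ℝ) (e : ℕ → V) {m : ℕ}
    (he : ∀ p q, p < 2*m → q < 2*m → ω (e p) (e q) = eps p q) :
    LinearIndependent ℝ (fun i : Fin (2*m) => e (i : ℕ)) := by
  rw [Fintype.linearIndependent_iff]
  intro g hg j
  set pj : ℕ := if (j : ℕ) % 2 = 1 then (j : ℕ) - 1 else (j : ℕ) + 1 with hpj
  have hjlt : (j : ℕ) < 2*m := j.isLt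
  have hpjlt : pj < 2*m := by
    rw [hpj]; split <;> omega
  have h0 := congrArg (ω (e pj)) hg
  rw [map_sum, map_zero] at h0
  have hterm : ∀ i : Fin (2*m),
      ω (e pj) (g i • e (i : ℕ)) = g i * (if (i : ℕ) = (j : ℕ) then
        (if (j : ℕ) % 2 = 1 then (-1:ℝ) else 1) else 0) := by
    intro i
    rw [map_smul, smul_eq_mul, he pj i hpjlt i.isLt]
    congr 1
    by_cases hj2 : (j : ℕ) % 2 = 1
    · rw [hpj, if_pos hj2, eps_odd hj2, if_pos hj2]
    · rw [hpj, if_neg hj2, eps_even (by omega), if_neg hj2]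
  rw [Finset.sum_congr rfl (fun i _ => hterm i)] at h0
  rw [Finset.sum_eq_single j (fun i _ hne => by
      rw [if_neg (fun hc => hne (Fin.ext hc)), mul_zero])
    (fun h => absurd (Finset.mem_univ j) h), if_pos rfl] at h0
  by_cases hj2 : (j : ℕ) % 2 = 1
  · rw [if_pos hj2] at h0
    have : g j * -1 = 0 := h0
    linarith
  · rw [if_neg hj2] at h0
    have : g j * 1 = 0 := h0
    linarith

end LefAux

namespace LefAux

open ExteriorAlgebra

variable {V : Type*} [AddCommGroup V] [Module ℝ V]

lemma asBilinForm_sub (v w : V) (x y : ExteriorAlgebra ℝ (Module.Dual ℝ V)) :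
    asBilinForm (x - y) v w = asBilinForm x v w - asBilinForm y v w := by
  simp [asBilinForm]

lemma asBilinForm_sum (v w : V) {ι : Type*} (s : Finset ι)
    (f : ι → ExteriorAlgebra ℝ (Module.Dual ℝ V)) :
    asBilinForm (∑ i ∈ s, f i) v w = ∑ i ∈ s, asBilinForm (f i) v w := by
  simp [asBilinForm]

lemma asB_Om {m : ℕ} (bb : Module.Basis (Fin (2*m)) ℝ V) (u v : Fin (2*m)) :
    asBilinForm (Om (fun i => if h : i < 2*m then bb.dualBasis ⟨i, h⟩ else 0) m) (bb u) (bb v)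
      = eps (u : ℕ) (v : ℕ) := by
  set dd : ℕ → Module.Dual ℝ V := fun i => if h : i < 2*m then bb.dualBasis ⟨i, h⟩ else 0
    with hdd
  have hxg : ∀ (i : ℕ) (h : i < 2*m), xg dd i = ExteriorAlgebra.ι ℝ (bb.dualBasis ⟨i, h⟩) := by
    intro i h
    rw [xg, hdd]
    simp only [dif_pos h]
  rw [Om, asBilinForm_sum]
  have hterm : ∀ i ∈ Finset.range m,
      asBilinForm (xg dd (2*i+1) * xg dd (2*i)) (bb u) (bb v)
        = ((if (u:ℕ) = 2*i+1 then (1:ℝ) else 0) * (if (v:ℕ) = 2*i then 1 else 0)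
          - (if (u:ℕ) = 2*i then (1:ℝ) else 0) * (if (v:ℕ) = 2*i+1 then 1 else 0)) := by
    intro i hi
    have him : i < m := Finset.mem_range.1 hi
    rw [hxg (2*i+1) (by omega), hxg (2*i) (by omega), asBilinForm_prod,
      Module.Basis.dualBasis_apply_self, Module.Basis.dualBasis_apply_self, Module.Basis.dualBasis_apply_self,
      Module.Basis.dualBasis_apply_self]
    simp only [Fin.ext_iff]
  rw [Finset.sum_congr rfl hterm]
  rw [Finset.sum_eq_single ((u:ℕ)/2) (fun i _ hne => by
      have h1 : ¬((u:ℕ) = 2*i+1) := by omega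
      have h2 : ¬((u:ℕ) = 2*i) := by omega
      rw [if_neg h1, if_neg h2]
      ring)
    (fun h => by
      exfalso
      exact h (Finset.mem_range.2 (by have := u.isLt; omega)))]
  rw [eps]
  split_ifs <;> (try norm_num) <;> (exfalso; omega)

end LefAux

namespace LefAux

lemma main_surj {D : Type*} [AddCommGroup D] [Module ℝ D] (dd : ℕ → D) (m k : ℕ)
    (hmk : m ≤ k + 1) {γ : ExteriorAlgebra ℝ D} (hγ : γ ∈ Sc dd (2*m) (k+2)) :
    ∃ α ∈ Sc dd (2*m) k, Om dd m * α = γ := by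
  have h2 : k + 2 = k + 2*1 := by ring
  rw [h2] at hγ
  obtain ⟨α, hα, heq⟩ := main_induction dd m 1 k (by omega) γ hγ
  rw [pow_one] at heq
  exact ⟨α, hα, heq⟩

end LefAux


/-- if `dim V = 2m`, `m ≥ 1`, and `ω` is a nondegenerate alternating bilinear
form on `V` regarded as `Ω ∈ Λ²V*`, then for every `k ≥ m - 1` exterior multiplication
`ε(ω) : Λ^k V* → Λ^{k+2} V*`, `α ↦ ω ∧ α`, is surjective. -/
theorem wedge_mul_surjective_of_ge {V : Type*} [AddCommGroup V] [Module ℝ V]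
    [FiniteDimensional ℝ V] (m : ℕ) (hm : 1 ≤ m)
    (hdim : Module.finrank ℝ V = 2 * m)
    (ω : V →ₗ[ℝ] V →ₗ[ℝ] ℝ)
    (halt : ∀ v : V, ω v v = 0)
    (hnondeg : ∀ v : V, (∀ w : V, ω v w = 0) → v = 0)
    (Ω : ⋀[ℝ]^2 (Module.Dual ℝ V))
    (hΩ : ∀ v w : V, asBilinForm (Ω : ExteriorAlgebra ℝ (Module.Dual ℝ V)) v w = ω v w)
    (k : ℕ) (hk : m - 1 ≤ k) :
    ∀ γ : ⋀[ℝ]^(k + 2) (Module.Dual ℝ V), ∃ α : ⋀[ℝ]^k (Module.Dual ℝ V),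
      (Ω : ExteriorAlgebra ℝ (Module.Dual ℝ V)) * (α : ExteriorAlgebra ℝ (Module.Dual ℝ V))
        = (γ : ExteriorAlgebra ℝ (Module.Dual ℝ V)) := by
  intro γ
  classical
  obtain ⟨e, he⟩ := LefAux.exists_sympl m V ω halt hnondeg hdim
  have hLI := LefAux.sympl_li ω e he
  have hcard : Fintype.card (Fin (2*m)) = Module.finrank ℝ V := by simp [hdim]
  haveI : Nonempty (Fin (2*m)) := ⟨⟨0, by omega⟩⟩
  set bb : Module.Basis (Fin (2*m)) ℝ V := basisOfLinearIndependentOfCardEqFinrank hLI hcard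
    with hbbdef
  have hbb : ∀ i : Fin (2*m), bb i = e (i : ℕ) := by
    intro i
    rw [hbbdef, coe_basisOfLinearIndependentOfCardEqFinrank]
  set dd : ℕ → Module.Dual ℝ V := fun i => if h : i < 2*m then bb.dualBasis ⟨i, h⟩ else 0
    with hdd
  have hmemΩ : (Ω : ExteriorAlgebra ℝ (Module.Dual ℝ V)) ∈ LefAux.Sc dd (2*m) 2 :=
    LefAux.ext_le_Sc bb.dualBasis 2 Ω.2
  have hmemOm : LefAux.Om dd m ∈ LefAux.Sc dd (2*m) 2 := LefAux.Om_mem dd m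
  have hdiff : (Ω : ExteriorAlgebra ℝ (Module.Dual ℝ V)) - LefAux.Om dd m
      ∈ LefAux.Sc dd (2*m) 2 := Submodule.sub_mem _ hmemΩ hmemOm
  have hrepr := LefAux.sc2_repr bb _ hdiff
  have hcoef : ∀ u v : Fin (2*m),
      asBilinForm ((Ω : ExteriorAlgebra ℝ (Module.Dual ℝ V)) - LefAux.Om dd m)
        (bb u) (bb v) = 0 := by
    intro u v
    rw [LefAux.asBilinForm_sub, hΩ, LefAux.asB_Om, hbb u, hbb v,
      he _ _ u.isLt v.isLt, sub_self]
  have hΩOm : (Ω : ExteriorAlgebra ℝ (Module.Dual ℝ V)) = LefAux.Om dd m := by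
    rw [← sub_eq_zero, hrepr]
    refine Finset.sum_eq_zero fun z _ => ?_
    rw [hcoef, zero_smul]
  have hγ : (γ : ExteriorAlgebra ℝ (Module.Dual ℝ V)) ∈ LefAux.Sc dd (2*m) (k + 2) :=
    LefAux.ext_le_Sc bb.dualBasis (k+2) γ.2
  obtain ⟨α, hαmem, hαeq⟩ := LefAux.main_surj dd m k (by omega) hγ
  refine ⟨⟨α, LefAux.Sc_le_ext dd (2*m) k hαmem⟩, ?_⟩
  show (Ω : ExteriorAlgebra ℝ (Module.Dual ℝ V)) * α
    = (γ : ExteriorAlgebra ℝ (Module.Dual ℝ V))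
  rw [hΩOm]
  exact hαeq
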